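/- For every integer n ≥ 0, every integer r ≥ 1 and every real number x, E_{n,λ}^{(r)}(x) = Σ_{k=0}^{n} C_k^{(r)}(x)·S_{2,λ}(n,k). -/

import Mathlib

open Finset PowerSeries

/-- degenerate falling factorial `(x)_{n,λ}`; `dff 1 x n` is the ordinary falling factorial. -/
noncomputable def dff (lam x : ℝ) (n : ℕ) : ℝ := ∏ i ∈ Finset.range n, (x - (i : ℝ) * lam)

/-- `(1)_{n,1/λ} = ∏_{i<n} (1 - i/λ)`. -/
noncomputable def oneFall (lam : ℝ) (n : ℕ) : ℝ := ∏ i ∈ Finset.range n, (1 - (i : ℝ) / lam)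

/-- degenerate exponential `e_λ^x(t)` as a formal power series. -/
noncomputable def degExp (lam x : ℝ) : PowerSeries ℝ :=
  PowerSeries.mk fun n => dff lam x n / n.factorial

/-- `(1+t)^y = Σ_{n≥0} (y)_n t^n/n!`. -/
noncomputable def onePlus (y : ℝ) : PowerSeries ℝ :=
  PowerSeries.mk fun n => dff 1 y n / n.factorial

/-- `(1-t)^y = Σ_{n≥0} (y)_n (-1)^n t^n/n!`. -/
noncomputable def oneMinus (y : ℝ) : PowerSeries ℝ :=
  PowerSeries.mk fun n => dff 1 y n * (-1) ^ n / n.factorial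

/-- `log_λ(1+t) = Σ_{n≥1} λ^{n-1} (1)_{n,1/λ} t^n/n!`. -/
noncomputable def degLog (lam : ℝ) : PowerSeries ℝ :=
  PowerSeries.mk fun n => if n = 0 then 0 else lam ^ (n - 1) * oneFall lam n / n.factorial

/-- `log_λ(1-t) = Σ_{n≥1} λ^{n-1} (1)_{n,1/λ} (-1)^n t^n/n!`. -/
noncomputable def degLogNeg (lam : ℝ) : PowerSeries ℝ :=
  PowerSeries.mk fun n =>
    if n = 0 then 0 else lam ^ (n - 1) * oneFall lam n * (-1) ^ n / n.factorial

/-- composition `f(g(t))` of formal power series (the usual composition when the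
constant term of `g` is zero). -/
noncomputable def pcomp (f g : PowerSeries ℝ) : PowerSeries ℝ :=
  PowerSeries.mk fun n =>
    ∑ k ∈ Finset.range (n + 1), (PowerSeries.coeff k f) * (PowerSeries.coeff n (g ^ k))


lemma dff_zero_left (lam : ℝ) (n : ℕ) : dff lam 0 n = if n = 0 then 1 else 0 := by
  cases n with
  | zero => simp [dff]
  | succ m =>
    simp only [dff, Nat.succ_ne_zero, if_false]
    apply Finset.prod_eq_zero (Finset.mem_range.2 (Nat.succ_pos m))
    simp

lemma dff_succ (lam x : ℝ) (n : ℕ) : dff lam x (n+1) = dff lam x n * (x - n * lam) := by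
  simp [dff, Finset.prod_range_succ]

lemma dff_add (lam x y : ℝ) (n : ℕ) :
    dff lam (x + y) n
      = ∑ m ∈ Finset.range (n + 1), (n.choose m : ℝ) * dff lam x m * dff lam y (n - m) := by
  induction n with
  | zero => simp [dff]
  | succ n ih =>
    rw [dff_succ, ih, Finset.sum_mul]
    have key : ∀ m ∈ Finset.range (n+1),
        (n.choose m : ℝ) * dff lam x m * dff lam y (n - m) * (x + y - n * lam)
        = (n.choose m : ℝ) * dff lam x (m+1) * dff lam y (n - m)
          + (n.choose m : ℝ) * dff lam x m * dff lam y (n - m + 1) := by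
      intro m hm
      rw [Finset.mem_range] at hm
      have h1 := dff_succ lam x m
      have h2 := dff_succ lam y (n - m)
      have h3 : ((n - m : ℕ) : ℝ) = (n : ℝ) - m := by
        have : m ≤ n := Nat.lt_succ_iff.mp hm
        push_cast [this]; ring
      rw [h1, h2, h3]; ring
    rw [Finset.sum_congr rfl key, Finset.sum_add_distrib]
    have e1 : ∑ m ∈ Finset.range (n+1), (n.choose m : ℝ) * dff lam x (m+1) * dff lam y (n - m)
        = ∑ m ∈ Finset.range (n+2),
            (if m = 0 then 0 else (n.choose (m-1) : ℝ) * dff lam x m * dff lam y (n+1-m)) := by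
      rw [Finset.sum_range_succ' (fun m =>
        (if m = 0 then 0 else (n.choose (m-1) : ℝ) * dff lam x m * dff lam y (n+1-m)))]
      simp
    have e2 : ∑ m ∈ Finset.range (n+1), (n.choose m : ℝ) * dff lam x m * dff lam y (n - m + 1)
        = ∑ m ∈ Finset.range (n+2), (n.choose m : ℝ) * dff lam x m * dff lam y (n+1-m) := by
      conv_rhs => rw [Finset.sum_range_succ]
      simp only [Nat.choose_succ_self, Nat.cast_zero, zero_mul, add_zero]
      apply Finset.sum_congr rfl
      intro m hm
      rw [Finset.mem_range] at hm
      congr 2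
      omega
    rw [e1, e2, ← Finset.sum_add_distrib]
    apply Finset.sum_congr rfl
    intro m hm
    rw [Finset.mem_range] at hm
    rcases Nat.eq_zero_or_pos m with h | h
    · subst h; simp
    · rw [if_neg (Nat.pos_iff_ne_zero.mp h)]
      have : (n+1).choose m = n.choose (m-1) + n.choose m := by
        rcases Nat.exists_eq_add_of_lt h with ⟨m', rfl⟩
        simp only [Nat.zero_add, Nat.add_sub_cancel]
        rw [Nat.choose_succ_succ]
      rw [this]
      push_cast
      ring

lemma degExp_zero (lam : ℝ) : degExp lam 0 = 1 := by
  ext n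
  simp [degExp, dff_zero_left, PowerSeries.coeff_one]
  split <;> simp [*]

lemma degExp_mul (lam x y : ℝ) : degExp lam x * degExp lam y = degExp lam (x + y) := by
  ext n
  rw [PowerSeries.coeff_mul, Finset.Nat.sum_antidiagonal_eq_sum_range_succ
    (fun i j => (PowerSeries.coeff i (degExp lam x)) * (PowerSeries.coeff j (degExp lam y)))]
  simp only [degExp, PowerSeries.coeff_mk, dff_add lam x y n, Finset.sum_div]
  apply Finset.sum_congr rfl
  intro m hm
  rw [Finset.mem_range, Nat.lt_succ_iff] at hm
  rw [div_mul_div_comm]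
  rw [eq_div_iff (by positivity), div_mul_eq_mul_div, div_eq_iff (by positivity)]
  have : (m.factorial : ℝ) * (n-m).factorial * (n.choose m) = n.factorial := by
    rw_mod_cast [← Nat.choose_mul_factorial_mul_factorial hm]; ring
  calc dff lam x m * dff lam y (n - m) * (n.factorial : ℝ)
      = dff lam x m * dff lam y (n-m) * ((m.factorial : ℝ) * (n-m).factorial * (n.choose m)) := by
        rw [this]
    _ = (n.choose m : ℝ) * dff lam x m * dff lam y (n - m) * ((m.factorial :ℝ) * (n-m).factorial) := by ring

lemma degExp_pow (lam : ℝ) (k : ℕ) : degExp lam 1 ^ k = degExp lam k := by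
  induction k with
  | zero => simpa using (degExp_zero lam).symm
  | succ k ih =>
    rw [pow_succ, ih, degExp_mul]
    norm_num

lemma degExp_one_one : degExp 1 1 = 1 + PowerSeries.X := by
  ext n
  simp only [degExp, PowerSeries.coeff_mk, map_add, PowerSeries.coeff_one, PowerSeries.coeff_X]
  match n with
  | 0 => simp [dff]
  | 1 => simp [dff]
  | (m+2) =>
    have : dff 1 1 (m+2) = 0 := by
      apply Finset.prod_eq_zero (i := 1) (Finset.mem_range.2 (by omega))
      norm_num
    simp [this]

lemma constantCoeff_degExp (lam x : ℝ) : PowerSeries.constantCoeff (degExp lam x) = 1 := by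
  have : PowerSeries.constantCoeff (degExp lam x) = PowerSeries.coeff 0 (degExp lam x) := by
    simp [PowerSeries.coeff_zero_eq_constantCoeff]
  rw [this]
  simp [degExp, dff]

lemma coeff_pow_eq_zero {g : PowerSeries ℝ} (hg : PowerSeries.constantCoeff g = 0) :
    ∀ k n : ℕ, n < k → PowerSeries.coeff n (g ^ k) = 0 := by
  intro k
  induction k with
  | zero => intro n h; omega
  | succ k ih =>
    intro n h
    rw [pow_succ, PowerSeries.coeff_mul]
    apply Finset.sum_eq_zero
    rintro ⟨a, b⟩ hab
    rw [Finset.HasAntidiagonal.mem_antidiagonal] at hab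
    rcases Nat.lt_or_ge a k with ha | ha
    · rw [ih a ha, zero_mul]
    · have hb : b = 0 := by omega
      subst hb
      rw [PowerSeries.coeff_zero_eq_constantCoeff, hg, mul_zero]

lemma pcomp_add (u v g : PowerSeries ℝ) : pcomp (u + v) g = pcomp u g + pcomp v g := by
  ext n
  simp [pcomp, add_mul, Finset.sum_add_distrib]

lemma pcomp_one (g : PowerSeries ℝ) : pcomp 1 g = 1 := by
  ext n
  simp only [pcomp, PowerSeries.coeff_mk, PowerSeries.coeff_one]
  rw [Finset.sum_eq_single 0]
  · simp
  · intro k hk hk0; simp [hk0]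
  · simp

lemma pcomp_C_mul (c : ℝ) (u g : PowerSeries ℝ) :
    pcomp (PowerSeries.C c * u) g = PowerSeries.C c * pcomp u g := by
  ext n
  simp [pcomp, PowerSeries.coeff_C_mul, Finset.mul_sum, mul_assoc]

lemma pcomp_mul {g : PowerSeries ℝ} (hg : PowerSeries.constantCoeff g = 0)
    (u v : PowerSeries ℝ) : pcomp (u * v) g = pcomp u g * pcomp v g := by
  ext n
  have hzero := coeff_pow_eq_zero hg
  -- abbreviation
  set F : ℕ → ℕ → ℝ := fun i j =>
    (PowerSeries.coeff i u) * (PowerSeries.coeff j v) * (PowerSeries.coeff n (g ^ (i + j)))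
    with hF
  have lhs_eq : PowerSeries.coeff n (pcomp (u * v) g)
      = ∑ k ∈ Finset.range (n+1), ∑ i ∈ Finset.range (k+1), F i (k - i) := by
    simp only [pcomp, PowerSeries.coeff_mk]
    apply Finset.sum_congr rfl
    intro k _
    rw [PowerSeries.coeff_mul, Finset.sum_mul,
      Finset.Nat.sum_antidiagonal_eq_sum_range_succ
        (fun i j => PowerSeries.coeff i u * PowerSeries.coeff j v * PowerSeries.coeff n (g ^ k))]
    apply Finset.sum_congr rfl
    intro i hi
    rw [Finset.mem_range, Nat.lt_succ_iff] at hi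
    have : i + (k - i) = k := by omega
    rw [hF]
    simp only []
    rw [this]
  have rhs_eq : PowerSeries.coeff n (pcomp u g * pcomp v g)
      = ∑ i ∈ Finset.range (n+1), ∑ j ∈ Finset.range (n+1), F i j := by
    rw [PowerSeries.coeff_mul]
    simp only [pcomp, PowerSeries.coeff_mk]
    have step1 : ∀ p ∈ Finset.HasAntidiagonal.antidiagonal n,
        (∑ k ∈ Finset.range (p.1 + 1), PowerSeries.coeff k u * PowerSeries.coeff p.1 (g ^ k)) *
        (∑ k ∈ Finset.range (p.2 + 1), PowerSeries.coeff k v * PowerSeries.coeff p.2 (g ^ k))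
        = ∑ i ∈ Finset.range (n+1), ∑ j ∈ Finset.range (n+1),
            (PowerSeries.coeff i u * PowerSeries.coeff p.1 (g ^ i)) *
            (PowerSeries.coeff j v * PowerSeries.coeff p.2 (g ^ j)) := by
      rintro ⟨a, b⟩ hab
      rw [Finset.HasAntidiagonal.mem_antidiagonal] at hab
      have ea : (∑ k ∈ Finset.range (a + 1), PowerSeries.coeff k u * PowerSeries.coeff a (g ^ k))
          = ∑ k ∈ Finset.range (n + 1), PowerSeries.coeff k u * PowerSeries.coeff a (g ^ k) := by
        apply Finset.sum_subset
        · intro t ht; rw [Finset.mem_range] at *; omega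
        · intro t ht hts
          rw [Finset.mem_range, Nat.lt_succ_iff] at ht
          simp only [Finset.mem_range, Nat.lt_succ_iff, not_le] at hts
          rw [hzero t a hts, mul_zero]
      have eb : (∑ k ∈ Finset.range (b + 1), PowerSeries.coeff k v * PowerSeries.coeff b (g ^ k))
          = ∑ k ∈ Finset.range (n + 1), PowerSeries.coeff k v * PowerSeries.coeff b (g ^ k) := by
        apply Finset.sum_subset
        · intro t ht; rw [Finset.mem_range] at *; omega
        · intro t ht hts
          rw [Finset.mem_range, Nat.lt_succ_iff] at ht
          simp only [Finset.mem_range, Nat.lt_succ_iff, not_le] at hts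
          rw [hzero t b hts, mul_zero]
      rw [ea, eb, Finset.sum_mul_sum]
    rw [Finset.sum_congr rfl step1, Finset.sum_comm]
    -- now: Σ_{i} Σ_{p∈antidiag n} Σ_j ... ; swap again inside
    apply Finset.sum_congr rfl
    intro i _
    rw [Finset.sum_comm]
    apply Finset.sum_congr rfl
    intro j _
    rw [hF]
    simp only []
    have : ∀ p ∈ Finset.HasAntidiagonal.antidiagonal n,
        (PowerSeries.coeff i u * PowerSeries.coeff p.1 (g ^ i)) *
        (PowerSeries.coeff j v * PowerSeries.coeff p.2 (g ^ j))
        = (PowerSeries.coeff i u * PowerSeries.coeff j v) *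
          (PowerSeries.coeff p.1 (g ^ i) * PowerSeries.coeff p.2 (g ^ j)) := by
      intro p _; ring
    rw [Finset.sum_congr rfl this, ← Finset.mul_sum, ← PowerSeries.coeff_mul, ← pow_add]
  rw [lhs_eq, rhs_eq]
  -- triangle vs square
  have square : ∑ i ∈ Finset.range (n+1), ∑ j ∈ Finset.range (n+1), F i j
      = ∑ i ∈ Finset.range (n+1), ∑ j ∈ Finset.range (n+1 - i), F i j := by
    apply Finset.sum_congr rfl
    intro i hi
    rw [Finset.mem_range, Nat.lt_succ_iff] at hi
    symm
    apply Finset.sum_subset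
    · intro t ht; rw [Finset.mem_range] at *; omega
    · intro t ht hts
      rw [Finset.mem_range] at ht hts
      have : n < i + t := by omega
      rw [hF]
      simp only []
      rw [hzero (i + t) n this, mul_zero]
  rw [square]
  -- reindex triangle
  rw [Finset.sum_sigma', Finset.sum_sigma']
  apply Finset.sum_nbij' (fun x => (⟨x.2, x.1 - x.2⟩ : (_ : ℕ) × ℕ))
    (fun x => (⟨x.1 + x.2, x.1⟩ : (_ : ℕ) × ℕ))
  · rintro ⟨k, i⟩ h
    simp only [Finset.mem_sigma, Finset.mem_range] at *
    omega
  · rintro ⟨i, j⟩ h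
    simp only [Finset.mem_sigma, Finset.mem_range] at *
    omega
  · rintro ⟨k, i⟩ h
    simp only [Finset.mem_sigma, Finset.mem_range] at h
    simp only [Sigma.mk.inj_iff, heq_eq_eq]
    refine ⟨?_, ?_⟩ <;> first | trivial | omega
  · rintro ⟨i, j⟩ h
    simp only [Finset.mem_sigma, Finset.mem_range] at h
    simp only [Sigma.mk.inj_iff, heq_eq_eq]
    refine ⟨?_, ?_⟩ <;> first | trivial | omega
  · rintro ⟨k, i⟩ h
    simp only [Finset.mem_sigma, Finset.mem_range] at h
    rfl

lemma coeff_sub_one_pow (h : PowerSeries ℝ) (k n : ℕ) :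
    PowerSeries.coeff n ((h - 1) ^ k)
      = ∑ j ∈ Finset.range (k + 1),
          (-1 : ℝ) ^ (j + k) * (k.choose j : ℝ) * PowerSeries.coeff n (h ^ j) := by
  rw [sub_pow, map_sum]
  apply Finset.sum_congr rfl
  intro j _
  rw [one_pow, mul_one]
  have e1 : ((-1 : PowerSeries ℝ)) ^ (j + k) = PowerSeries.C ((-1 : ℝ) ^ (j + k)) := by
    rw [map_pow, map_neg, map_one]
  have e2 : ((k.choose j : ℕ) : PowerSeries ℝ) = PowerSeries.C (k.choose j : ℝ) :=
    (map_natCast (PowerSeries.C (R := ℝ)) _).symm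
  rw [e1, e2, mul_comm _ (PowerSeries.C (k.choose j : ℝ)), ← mul_assoc, ← map_mul,
    PowerSeries.coeff_C_mul]
  ring

lemma diff_dff (k l : ℕ) :
    ∑ j ∈ Finset.range (k + 1), (-1 : ℝ) ^ (j + k) * (k.choose j : ℝ) * (dff 1 j l / l.factorial)
      = if l = k then 1 else 0 := by
  have h := coeff_sub_one_pow (degExp 1 1) k l
  rw [show degExp 1 1 - 1 = PowerSeries.X by rw [degExp_one_one]; ring,
    PowerSeries.coeff_X_pow] at h
  rw [h]
  symm
  apply Finset.sum_congr rfl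
  intro j _
  rw [degExp_pow 1 j]
  simp [degExp]

lemma coeff_g_pow (lam : ℝ) (S2 : ℕ → ℕ → ℝ)
    (hS2 : ∀ (x : ℝ) (n : ℕ), dff lam x n = ∑ l ∈ Finset.range (n + 1), S2 n l * dff 1 x l)
    (k n : ℕ) :
    PowerSeries.coeff n ((degExp lam 1 - 1) ^ k)
      = if k ≤ n then S2 n k * k.factorial / n.factorial else 0 := by
  rw [coeff_sub_one_pow]
  have step1 : ∀ j ∈ Finset.range (k+1),
      (-1 : ℝ) ^ (j + k) * (k.choose j : ℝ) * PowerSeries.coeff n ((degExp lam 1) ^ j)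
      = ∑ l ∈ Finset.range (n+1),
          S2 n l * ((-1 : ℝ) ^ (j + k) * (k.choose j : ℝ) * (dff 1 j l / l.factorial))
            * l.factorial / n.factorial := by
    intro j _
    rw [degExp_pow]
    simp only [degExp, PowerSeries.coeff_mk]
    rw [hS2 (j : ℝ) n, Finset.sum_div, Finset.mul_sum]
    apply Finset.sum_congr rfl
    intro l _
    have : (l.factorial : ℝ) ≠ 0 := Nat.cast_ne_zero.2 l.factorial_ne_zero
    field_simp
  rw [Finset.sum_congr rfl step1, Finset.sum_comm]
  have step2 : ∀ l ∈ Finset.range (n+1),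
      (∑ j ∈ Finset.range (k+1),
        S2 n l * ((-1 : ℝ) ^ (j + k) * (k.choose j : ℝ) * (dff 1 j l / l.factorial))
          * l.factorial / n.factorial)
      = if l = k then S2 n l * l.factorial / n.factorial else 0 := by
    intro l _
    have : (∑ j ∈ Finset.range (k+1),
        S2 n l * ((-1 : ℝ) ^ (j + k) * (k.choose j : ℝ) * (dff 1 j l / l.factorial))
          * l.factorial / n.factorial)
        = (∑ j ∈ Finset.range (k+1),
            (-1 : ℝ) ^ (j + k) * (k.choose j : ℝ) * (dff 1 j l / l.factorial))
          * (S2 n l * l.factorial / n.factorial) := by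
      rw [Finset.sum_mul]
      apply Finset.sum_congr rfl
      intro j _
      ring
    rw [this, diff_dff]
    split <;> simp
  rw [Finset.sum_congr rfl step2, Finset.sum_ite_eq' (Finset.range (n+1))
    k (fun l => S2 n l * l.factorial / n.factorial)]
  simp [Nat.lt_succ_iff]
lemma pcomp_pow {g : PowerSeries ℝ} (hg : PowerSeries.constantCoeff g = 0)
    (u : PowerSeries ℝ) (r : ℕ) : pcomp (u ^ r) g = (pcomp u g) ^ r := by
  induction r with
  | zero => simpa using pcomp_one g
  | succ r ih => rw [pow_succ, pcomp_mul hg, ih, pow_succ]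

/-- `E_{n,λ}^{(r)}(x) = Σ_{k=0}^{n} C_k^{(r)}(x) S_{2,λ}(n,k)`. -/
theorem stmt_5 (lam : ℝ) (hlam : lam ≠ 0) (r : ℕ) (hr : 1 ≤ r)
    (S2 : ℕ → ℕ → ℝ)
    (hS2 : ∀ (x : ℝ) (n : ℕ), dff lam x n = ∑ l ∈ Finset.range (n + 1), S2 n l * dff 1 x l)
    (E C : ℝ → ℕ → ℝ)
    (hE : ∀ x : ℝ, (degExp lam 1 + degExp lam (-1)) ^ r *
      PowerSeries.mk (fun n => E x n / n.factorial) = 2 ^ r * degExp lam x)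
    (hC : ∀ x : ℝ, (onePlus 2 + 1) ^ r *
      PowerSeries.mk (fun n => C x n / n.factorial) = 2 ^ r * onePlus (x + r))
    (n : ℕ) (x : ℝ) :
    E x n = ∑ k ∈ Finset.range (n + 1), C x k * S2 n k := by
  set g : PowerSeries ℝ := degExp lam 1 - 1 with hgdef
  have hg : PowerSeries.constantCoeff g = 0 := by
    rw [hgdef, map_sub, constantCoeff_degExp, map_one, sub_self]
  -- pcomp of onePlus y is degExp lam y
  have key : ∀ y : ℝ, pcomp (onePlus y) g = degExp lam y := by
    intro y
    ext m
    simp only [pcomp, onePlus, degExp, PowerSeries.coeff_mk]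
    have : ∀ k ∈ Finset.range (m+1),
        dff 1 y k / k.factorial * PowerSeries.coeff m (g ^ k)
        = S2 m k * dff 1 y k / m.factorial := by
      intro k hk
      rw [Finset.mem_range, Nat.lt_succ_iff] at hk
      rw [hgdef, coeff_g_pow lam S2 hS2 k m, if_pos hk]
      have hk0 : (k.factorial : ℝ) ≠ 0 := Nat.cast_ne_zero.2 k.factorial_ne_zero
      field_simp
    rw [Finset.sum_congr rfl this]
    rw [← Finset.sum_div, ← hS2 y m]
  -- apply pcomp to hC
  have hC' : (degExp lam 2 + 1) ^ r * pcomp (PowerSeries.mk (fun m => C x m / m.factorial)) g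
      = 2 ^ r * degExp lam (x + r) := by
    have h2 : ((2 : PowerSeries ℝ)) ^ r = PowerSeries.C ((2 : ℝ) ^ r) := by
      rw [map_pow, map_ofNat]
    have := congrArg (fun f => pcomp f g) (hC x)
    rw [pcomp_mul hg, pcomp_pow hg, pcomp_add, pcomp_one, key 2] at this
    rw [h2, pcomp_C_mul, key (x + r), ← h2] at this
    exact this
  set F : PowerSeries ℝ := pcomp (PowerSeries.mk (fun m => C x m / m.factorial)) g with hFdef
  have fact1 : degExp lam 2 + 1 = degExp lam 1 * (degExp lam 1 + degExp lam (-1)) := by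
    rw [mul_add, degExp_mul, degExp_mul]
    norm_num [degExp_zero]
  have fact2 : degExp lam (x + r) = degExp lam x * degExp lam 1 ^ r := by
    rw [degExp_pow, degExp_mul, add_comm]
  have hE1ne : degExp lam 1 ^ r ≠ 0 := by
    apply pow_ne_zero
    intro h0
    have := constantCoeff_degExp lam 1
    rw [h0] at this
    simp at this
  have step : (degExp lam 1 + degExp lam (-1)) ^ r * F = 2 ^ r * degExp lam x := by
    apply mul_left_cancel₀ hE1ne
    calc degExp lam 1 ^ r * ((degExp lam 1 + degExp lam (-1)) ^ r * F)
        = (degExp lam 1 * (degExp lam 1 + degExp lam (-1))) ^ r * F := by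
          rw [mul_pow]; ring
      _ = (degExp lam 2 + 1) ^ r * F := by rw [fact1]
      _ = 2 ^ r * degExp lam (x + r) := hC'
      _ = degExp lam 1 ^ r * (2 ^ r * degExp lam x) := by rw [fact2]; ring
  have hAne : (degExp lam 1 + degExp lam (-1)) ^ r ≠ 0 := by
    apply pow_ne_zero
    intro h0
    have h1 : PowerSeries.constantCoeff (degExp lam 1 + degExp lam (-1)) = 2 := by
      rw [map_add, constantCoeff_degExp, constantCoeff_degExp]; norm_num
    rw [h0] at h1
    simp at h1
  have hFE : F = PowerSeries.mk (fun m => E x m / m.factorial) := by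
    apply mul_left_cancel₀ hAne
    rw [step, hE x]
  have final := congrArg (PowerSeries.coeff n) hFE
  rw [hFdef] at final
  simp only [pcomp, PowerSeries.coeff_mk] at final
  have conv1 : ∀ k ∈ Finset.range (n+1),
      C x k / k.factorial * PowerSeries.coeff n (g ^ k)
      = C x k * S2 n k / n.factorial := by
    intro k hk
    rw [Finset.mem_range, Nat.lt_succ_iff] at hk
    rw [hgdef, coeff_g_pow lam S2 hS2 k n, if_pos hk]
    have hk0 : (k.factorial : ℝ) ≠ 0 := Nat.cast_ne_zero.2 k.factorial_ne_zero
    field_simp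
  rw [Finset.sum_congr rfl conv1, ← Finset.sum_div] at final
  have hn0 : ((n.factorial : ℝ)) ≠ 0 := Nat.cast_ne_zero.2 n.factorial_ne_zero
  field_simp at final
  linarith [final]
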